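/- Let p be an odd prime. The domination number of the undirected zero divisor graph of M₂(ℤ/p) is exactly p+1. In particular the set consisting of [[1,a],[0,0]] for a ∈ ℤ/p together with [[0,0],[0,1]] is a minimal dominating set. -/

import Mathlib

set_option linter.unusedSectionVars false
set_option maxHeartbeats 1000000

namespace DomNum


variable {p : ℕ} [Fact p.Prime]

abbrev Mat (p : ℕ) := Matrix (Fin 2) (Fin 2) (ZMod p)

def proj (w : Fin 2 → ZMod p) : Option (ZMod p) :=
  if w 0 = 0 then none else some (w 1 / w 0)

def pvec (o : Option (ZMod p)) : Fin 2 → ZMod p := o.elim ![0, 1] fun t => ![1, t]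

/-- image line (column space) of a rank-one matrix -/
def imL (B : Mat p) : Option (ZMod p) :=
  if B 0 0 = 0 ∧ B 1 0 = 0 then proj ![B 0 1, B 1 1] else proj ![B 0 0, B 1 0]

/-- kernel line of a rank-one matrix -/
def krL (B : Mat p) : Option (ZMod p) :=
  if B 0 0 = 0 ∧ B 0 1 = 0 then proj ![-B 1 1, B 1 0] else proj ![-B 0 1, B 0 0]

lemma vec_eta (w : Fin 2 → ZMod p) : ![w 0, w 1] = w := by
  funext i; fin_cases i <;> simp

lemma ne_zero_iff {w : Fin 2 → ZMod p} : w ≠ 0 ↔ w 0 ≠ 0 ∨ w 1 ≠ 0 := by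
  rw [Function.ne_iff]
  constructor
  · rintro ⟨i, hi⟩; fin_cases i
    · exact Or.inl hi
    · exact Or.inr hi
  · rintro (h | h)
    · exact ⟨0, h⟩
    · exact ⟨1, h⟩

lemma proj_pvec (o : Option (ZMod p)) : proj (pvec o) = o := by
  cases o <;> simp [proj, pvec]

lemma pvec_ne_zero (o : Option (ZMod p)) : pvec o ≠ 0 := by
  cases o <;> simp [pvec, ne_zero_iff]

lemma proj_eq_iff {u v : Fin 2 → ZMod p} (hu : u ≠ 0) (hv : v ≠ 0) :
    proj u = proj v ↔ u 0 * v 1 = u 1 * v 0 := by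
  rw [ne_zero_iff] at hu hv
  unfold proj
  by_cases h0 : u 0 = 0 <;> by_cases h1 : v 0 = 0
  · simp [h0, h1]
  · have hu1 : u 1 ≠ 0 := by tauto
    simp only [h0, h1, if_true, if_false, if_neg h1]
    simp [h0, hu1, h1, eq_comm]
  · have hv1 : v 1 ≠ 0 := by tauto
    simp only [h0, h1, if_neg h0, if_true]
    simp [h1, hv1, h0]
  · simp only [if_neg h0, if_neg h1, Option.some_inj]
    rw [div_eq_div_iff h0 h1]
    constructor <;> intro h <;> linear_combination -h

lemma proj_mul_right {u : Fin 2 → ZMod p} {c : ZMod p} (hc : c ≠ 0) :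
    proj (fun i => u i * c) = proj u := by
  unfold proj
  simp only [mul_eq_zero, hc, or_false]
  by_cases h : u 0 = 0 <;> simp [h, mul_div_mul_right _ _ hc]

lemma proj_mul_left {a b c : ZMod p} (hc : c ≠ 0) :
    proj ![c * a, c * b] = proj ![a, b] := by
  have : (![c * a, c * b] : Fin 2 → ZMod p) = fun i => ![a, b] i * c := by
    funext i; fin_cases i <;> simp [mul_comm]
  rw [this, proj_mul_right hc]

lemma mat_ne_zero_iff {A : Mat p} :
    A ≠ 0 ↔ A 0 0 ≠ 0 ∨ A 0 1 ≠ 0 ∨ A 1 0 ≠ 0 ∨ A 1 1 ≠ 0 := by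
  constructor
  · intro h
    by_contra hc
    push_neg at hc
    obtain ⟨h1, h2, h3, h4⟩ := hc
    apply h
    ext i j
    fin_cases i <;> fin_cases j <;> assumption
  · rintro (h | h | h | h) <;> intro h0 <;> rw [h0] at h <;> simp at h

/-- every nonzero singular 2x2 matrix is an outer product of nonzero vectors -/
lemma decomp {A : Mat p} (hA : A ≠ 0) (hdet : A.det = 0) :
    ∃ u v : Fin 2 → ZMod p, u ≠ 0 ∧ v ≠ 0 ∧ ∀ i j, A i j = u i * v j := by
  rw [Matrix.det_fin_two, sub_eq_zero] at hdet
  by_cases h00 : A 0 0 ≠ 0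
  · refine ⟨![A 0 0, A 1 0], ![1, A 0 1 / A 0 0], ?_, ?_, ?_⟩
    · rw [ne_zero_iff]; left; simpa using h00
    · rw [ne_zero_iff]; left; simp
    · intro i j; fin_cases i <;> fin_cases j <;> simp <;> field_simp
      linear_combination hdet
  · push_neg at h00
    by_cases h01 : A 0 1 ≠ 0
    · refine ⟨![A 0 1, A 1 1], ![A 0 0 / A 0 1, 1], ?_, ?_, ?_⟩
      · rw [ne_zero_iff]; left; simpa using h01
      · rw [ne_zero_iff]; right; simp
      · intro i j; fin_cases i <;> fin_cases j <;> simp <;> field_simp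
        linear_combination -hdet
    · push_neg at h01
      refine ⟨![0, 1], ![A 1 0, A 1 1], ?_, ?_, ?_⟩
      · rw [ne_zero_iff]; right; simp
      · rw [ne_zero_iff]
        rcases mat_ne_zero_iff.mp hA with h | h | h | h
        · exact absurd h00 h
        · exact absurd h01 h
        · left; simpa using h
        · right; simpa using h
      · intro i j; fin_cases i <;> fin_cases j <;> simp [h00, h01]

/-- multiplication of outer products -/
lemma mul_outer {A B : Mat p} {u v u' v' : Fin 2 → ZMod p}
    (hA : ∀ i j, A i j = u i * v j) (hB : ∀ i j, B i j = u' i * v' j)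
    (hu : u ≠ 0) (hv' : v' ≠ 0) :
    A * B = 0 ↔ v 0 * u' 0 + v 1 * u' 1 = 0 := by
  have key : ∀ i j, (A * B) i j = u i * (v 0 * u' 0 + v 1 * u' 1) * v' j := by
    intro i j
    rw [Matrix.mul_apply, Fin.sum_univ_two, hA, hA, hB, hB]
    ring
  constructor
  · intro h
    obtain ⟨i, hi⟩ := Function.ne_iff.mp hu
    obtain ⟨j, hj⟩ := Function.ne_iff.mp hv'
    have := key i j
    rw [h] at this
    simp only [Matrix.zero_apply] at this
    rcases mul_eq_zero.mp this.symm with h' | h'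
    · rcases mul_eq_zero.mp h' with h'' | h''
      · exact absurd h'' hi
      · exact h''
    · exact absurd h' hj
  · intro h
    ext i j
    rw [key i j, h]
    simp

lemma imL_dec {A : Mat p} {u v : Fin 2 → ZMod p} (hu : u ≠ 0) (hv : v ≠ 0)
    (hA : ∀ i j, A i j = u i * v j) : imL A = proj u := by
  unfold imL
  by_cases h0 : v 0 = 0
  · have hv1 : v 1 ≠ 0 := by rcases ne_zero_iff.mp hv with h | h; exact absurd h0 h; exact h
    have hcond : A 0 0 = 0 ∧ A 1 0 = 0 := by constructor <;> simp [hA, h0]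
    rw [if_pos hcond, hA, hA]
    have : (![u 0 * v 1, u 1 * v 1] : Fin 2 → ZMod p) = fun i => u i * v 1 := by
      funext i; fin_cases i <;> simp
    rw [this, proj_mul_right hv1]
  · have hcond : ¬(A 0 0 = 0 ∧ A 1 0 = 0) := by
      rintro ⟨h1, h2⟩
      rcases ne_zero_iff.mp hu with h | h
      · exact h (by have := h1; rw [hA] at this; rcases mul_eq_zero.mp this with h' | h'
                    exacts [h', absurd h' h0])
      · exact h (by have := h2; rw [hA] at this; rcases mul_eq_zero.mp this with h' | h'
                    exacts [h', absurd h' h0])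
    rw [if_neg hcond, hA, hA]
    have : (![u 0 * v 0, u 1 * v 0] : Fin 2 → ZMod p) = fun i => u i * v 0 := by
      funext i; fin_cases i <;> simp
    rw [this, proj_mul_right h0]

lemma krL_dec {A : Mat p} {u v : Fin 2 → ZMod p} (hu : u ≠ 0) (hv : v ≠ 0)
    (hA : ∀ i j, A i j = u i * v j) : krL A = proj ![-v 1, v 0] := by
  unfold krL
  by_cases h0 : u 0 = 0
  · have hu1 : u 1 ≠ 0 := by rcases ne_zero_iff.mp hu with h | h; exact absurd h0 h; exact h
    have hcond : A 0 0 = 0 ∧ A 0 1 = 0 := by constructor <;> simp [hA, h0]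
    rw [if_pos hcond, hA, hA]
    have : -(u 1 * v 1) = u 1 * (-v 1) := by ring
    rw [this, proj_mul_left hu1]
  · have hcond : ¬(A 0 0 = 0 ∧ A 0 1 = 0) := by
      rintro ⟨h1, h2⟩
      rcases ne_zero_iff.mp hv with h | h
      · exact h (by have := h1; rw [hA] at this; rcases mul_eq_zero.mp this with h' | h'
                    exacts [absurd h' h0, h'])
      · exact h (by have := h2; rw [hA] at this; rcases mul_eq_zero.mp this with h' | h'
                    exacts [absurd h' h0, h'])
    rw [if_neg hcond, hA, hA]
    have : -(u 0 * v 1) = u 0 * (-v 1) := by ring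
    rw [this, proj_mul_left h0]

lemma perp_ne_zero {v : Fin 2 → ZMod p} (hv : v ≠ 0) :
    (![-v 1, v 0] : Fin 2 → ZMod p) ≠ 0 := by
  rw [ne_zero_iff] at hv ⊢
  rcases hv with h | h
  · right; simpa using h
  · left; simpa using h

/-- Key: one zero-divisor relation forces a line coincidence. -/
lemma dom_line {A B : Mat p} (hA : A ≠ 0) (hdA : A.det = 0)
    (hB : B ≠ 0) (hdB : B.det = 0) (h : A * B = 0) : imL B = krL A := by
  obtain ⟨u, v, hu, hv, hAd⟩ := decomp hA hdA
  obtain ⟨u', v', hu', hv', hBd⟩ := decomp hB hdB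
  rw [imL_dec hu' hv' hBd, krL_dec hu hv hAd]
  rw [proj_eq_iff hu' (perp_ne_zero hv)]
  have hz := (mul_outer hAd hBd hu hv').mp h
  simp only [Matrix.cons_val_zero, Matrix.cons_val_one, Matrix.head_cons]
  linear_combination hz

-- NEW PART
/-- the perpendicular-style vector for line L -/
def pL (L : Option (ZMod p)) : Fin 2 → ZMod p := ![pvec L 1, -(pvec L 0)]

lemma pL_ne_zero (L : Option (ZMod p)) : pL (p := p) L ≠ 0 := by
  have := pvec_ne_zero (p := p) L
  rw [ne_zero_iff] at this ⊢
  rcases this with h | h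
  · right; simpa [pL] using h
  · left; simpa [pL] using h

/-- family of matrices with kernel line L and image line M -/
def fmat (L M : Option (ZMod p)) (c : ZMod p) : Mat p :=
  Matrix.of fun i j => pvec M i * (c * pL L j)

lemma fmat_apply (L M : Option (ZMod p)) (c : ZMod p) (i j : Fin 2) :
    fmat L M c i j = pvec M i * ((fun j => c * pL L j) j) := rfl

lemma vL_ne_zero {L : Option (ZMod p)} {c : ZMod p} (hc : c ≠ 0) :
    (fun j => c * pL L j) ≠ 0 := by
  have h := pL_ne_zero (p := p) L
  rw [ne_zero_iff] at h ⊢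
  rcases h with h | h
  · left; exact mul_ne_zero hc h
  · right; exact mul_ne_zero hc h

lemma fmat_ne_zero {L M : Option (ZMod p)} {c : ZMod p} (hc : c ≠ 0) :
    fmat L M c ≠ 0 := by
  obtain ⟨i, hi⟩ := Function.ne_iff.mp (pvec_ne_zero (p := p) M)
  obtain ⟨j, hj⟩ := Function.ne_iff.mp (vL_ne_zero (L := L) hc)
  intro h
  have : fmat L M c i j = 0 := by rw [h]; rfl
  rw [fmat_apply] at this
  exact (mul_ne_zero hi hj) this

lemma fmat_det (L M : Option (ZMod p)) (c : ZMod p) : (fmat L M c).det = 0 := by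
  rw [Matrix.det_fin_two]
  show pvec M 0 * (c * pL L 0) * (pvec M 1 * (c * pL L 1))
      - pvec M 0 * (c * pL L 1) * (pvec M 1 * (c * pL L 0)) = 0
  ring

lemma imL_fmat {L M : Option (ZMod p)} {c : ZMod p} (hc : c ≠ 0) :
    imL (fmat L M c) = M := by
  rw [imL_dec (pvec_ne_zero M) (vL_ne_zero hc) (fmat_apply L M c), proj_pvec]

lemma krL_fmat {L M : Option (ZMod p)} {c : ZMod p} (hc : c ≠ 0) :
    krL (fmat L M c) = L := by
  rw [krL_dec (pvec_ne_zero M) (vL_ne_zero hc) (fmat_apply L M c)]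
  simp only [pL, Matrix.cons_val_zero, Matrix.cons_val_one, Matrix.head_cons,
    mul_neg, neg_neg]
  rw [proj_mul_left hc, vec_eta, proj_pvec]

lemma fmat_inj (L M : Option (ZMod p)) : Function.Injective (fmat (p := p) L M) := by
  intro c c' h
  obtain ⟨i, hi⟩ := Function.ne_iff.mp (pvec_ne_zero (p := p) M)
  obtain ⟨j, hj⟩ := Function.ne_iff.mp (pL_ne_zero (p := p) L)
  have he : fmat L M c i j = fmat L M c' i j := by rw [h]
  rw [fmat_apply, fmat_apply] at he
  have := mul_left_cancel₀ hi he
  exact mul_right_cancel₀ hj this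

-- NEW
lemma exists_two_not_mem {α : Type*} [Fintype α] [DecidableEq α] (S : Finset α)
    (h : S.card + 2 ≤ Fintype.card α) : ∃ x y, x ≠ y ∧ x ∉ S ∧ y ∉ S := by
  have h2 : 1 < Sᶜ.card := by rw [Finset.card_compl]; omega
  obtain ⟨x, hx, y, hy, hxy⟩ := Finset.one_lt_card.mp h2
  exact ⟨x, y, hxy, Finset.mem_compl.mp hx, Finset.mem_compl.mp hy⟩

lemma exists_one_not_mem {α : Type*} [Fintype α] [DecidableEq α] (S : Finset α)
    (h : S.card + 1 ≤ Fintype.card α) : ∃ x, x ∉ S := by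
  have h2 : 0 < Sᶜ.card := by rw [Finset.card_compl]; omega
  obtain ⟨x, hx⟩ := Finset.card_pos.mp h2
  exact ⟨x, Finset.mem_compl.mp hx⟩

lemma lower_bound (hp3 : 3 ≤ p) (D : Set (Mat p))
    (h1 : ∀ A ∈ D, A ≠ 0 ∧ A.det = 0)
    (h2 : ∀ A, (A ≠ 0 ∧ A.det = 0) → A ∉ D →
      ∃ B ∈ D, A ≠ B ∧ (A * B = 0 ∨ B * A = 0)) :
    p + 1 ≤ Nat.card D := by
  classical
  by_contra hlt
  push_neg at hlt
  have hfin : D.Finite := Set.toFinite D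
  set F : Finset (Mat p) := hfin.toFinset with hF
  have hFc : F.card ≤ p := by
    have : Nat.card D = F.card := by
      rw [Nat.card_coe_set_eq, Set.ncard_eq_toFinset_card _ hfin]
    omega
  have hmemF : ∀ {B : Mat p}, B ∈ F ↔ B ∈ D := fun {B} => hfin.mem_toFinset
  set Im : Finset (Option (ZMod p)) := F.image imL with hIm
  set Kr : Finset (Option (ZMod p)) := F.image krL with hKr
  have hopt : Fintype.card (Option (ZMod p)) = p + 1 := by
    rw [Fintype.card_option, ZMod.card]
  -- the undominated family
  have fam : ∀ L M, L ∉ Im → M ∉ Kr → ∀ c : ZMod p, c ≠ 0 → fmat L M c ∈ F := by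
    intro L M hL hM c hc
    by_cases hmem : fmat L M c ∈ D
    · exact hmemF.mpr hmem
    · obtain ⟨B, hBD, _, hz⟩ := h2 _ ⟨fmat_ne_zero hc, fmat_det L M c⟩ hmem
      obtain ⟨hB0, hBdet⟩ := h1 B hBD
      rcases hz with hz | hz
      · have he := dom_line (fmat_ne_zero hc) (fmat_det L M c) hB0 hBdet hz
        rw [krL_fmat hc] at he
        exact absurd (Finset.mem_image.mpr ⟨B, hmemF.mpr hBD, he⟩) hL
      · have he := dom_line hB0 hBdet (fmat_ne_zero hc) (fmat_det L M c) hz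
        rw [imL_fmat hc] at he
        exact absurd (Finset.mem_image.mpr ⟨B, hmemF.mpr hBD, he.symm⟩) hM
  set T : Option (ZMod p) → Option (ZMod p) → Finset (Mat p) :=
    fun L M => ((Finset.univ : Finset (ZMod p)).erase 0).image (fmat L M) with hT
  have hTcard : ∀ L M, (T L M).card = p - 1 := by
    intro L M
    rw [hT]
    rw [Finset.card_image_of_injective _ (fmat_inj L M),
      Finset.card_erase_of_mem (Finset.mem_univ 0), Finset.card_univ, ZMod.card]
  have hTsub : ∀ L M, L ∉ Im → M ∉ Kr → T L M ⊆ F := by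
    intro L M hL hM x hx
    rw [hT] at hx
    obtain ⟨c, hc, rfl⟩ := Finset.mem_image.mp hx
    exact fam L M hL hM c (Finset.ne_of_mem_erase hc)
  have himT : ∀ L M x, x ∈ T L M → imL x = M := by
    intro L M x hx
    obtain ⟨c, hc, rfl⟩ := Finset.mem_image.mp hx
    exact imL_fmat (Finset.ne_of_mem_erase hc)
  -- two small-card claims
  have hIm_le : Im.card ≤ p := le_trans Finset.card_image_le hFc
  have hKr_le : Kr.card ≤ p := le_trans Finset.card_image_le hFc
  -- first missing lines
  obtain ⟨L₀, hL₀⟩ := exists_one_not_mem Im (by rw [hopt]; omega)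
  obtain ⟨M₀, hM₀⟩ := exists_one_not_mem Kr (by rw [hopt]; omega)
  -- Im has at most 2 elements
  have hbound : ∀ (f : Mat p → Option (ZMod p)) (v : Option (ZMod p)),
      (∀ x ∈ T L₀ M₀, f x = v) → (F.image f).card ≤ 2 := by
    intro f v hfv
    have hsub : F.image f ⊆ insert v ((F \ T L₀ M₀).image f) := by
      intro x hx
      obtain ⟨B, hB, rfl⟩ := Finset.mem_image.mp hx
      by_cases hBT : B ∈ T L₀ M₀
      · rw [hfv B hBT]; exact Finset.mem_insert_self _ _
      · exact Finset.mem_insert_of_mem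
          (Finset.mem_image.mpr ⟨B, Finset.mem_sdiff.mpr ⟨hB, hBT⟩, rfl⟩)
    have hcard := (Finset.card_le_card hsub).trans
      ((Finset.card_insert_le _ _).trans (Nat.add_le_add_right Finset.card_image_le 1))
    have hsd : (F \ T L₀ M₀).card = F.card - (T L₀ M₀).card :=
      Finset.card_sdiff_of_subset (hTsub L₀ M₀ hL₀ hM₀)
    have := hTcard L₀ M₀
    omega
  have hkrT : ∀ x ∈ T L₀ M₀, krL x = L₀ := by
    intro x hx
    obtain ⟨c, hc, rfl⟩ := Finset.mem_image.mp hx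
    exact krL_fmat (Finset.ne_of_mem_erase hc)
  have hIm2 : Im.card ≤ 2 := hbound imL M₀ (himT L₀ M₀)
  have hKr2 : Kr.card ≤ 2 := hbound krL L₀ hkrT
  -- two missing lines each
  obtain ⟨L₁, L₂, hLne, hL₁, hL₂⟩ := exists_two_not_mem Im (by rw [hopt]; omega)
  obtain ⟨M₁, M₂, hMne, hM₁, hM₂⟩ := exists_two_not_mem Kr (by rw [hopt]; omega)
  -- two disjoint families inside F
  have hdisj : Disjoint (T L₁ M₁) (T L₂ M₂) := by
    rw [Finset.disjoint_left]
    intro x hx1 hx2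
    have e1 := himT L₁ M₁ x hx1
    have e2 := himT L₂ M₂ x hx2
    exact hMne (e1 ▸ e2 ▸ rfl)
  have hsub12 : T L₁ M₁ ∪ T L₂ M₂ ⊆ F :=
    Finset.union_subset (hTsub _ _ hL₁ hM₁) (hTsub _ _ hL₂ hM₂)
  have hfinal := Finset.card_le_card hsub12
  rw [Finset.card_union_of_disjoint hdisj, hTcard, hTcard] at hfinal
  omega


end DomNum

open DomNum

/-- For an odd prime p, the domination number of the undirected zero divisor graph of
M₂(ℤ/p) is exactly p+1: the set of matrices [[1,a],[0,0]] (a ∈ ℤ/p) together with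
[[0,0],[0,1]] is a dominating set of cardinality p+1, and every dominating set has at least
p+1 elements. -/
theorem domination_number_matrix_ring (p : ℕ) [Fact p.Prime] (hodd : Odd p) :
    let Vtx : Matrix (Fin 2) (Fin 2) (ZMod p) → Prop := fun A => A ≠ 0 ∧ A.det = 0
    let Dominating : Set (Matrix (Fin 2) (Fin 2) (ZMod p)) → Prop := fun D =>
      (∀ A ∈ D, Vtx A) ∧
      (∀ A, Vtx A → A ∉ D → ∃ B ∈ D, A ≠ B ∧ (A * B = 0 ∨ B * A = 0))
    let D₀ : Set (Matrix (Fin 2) (Fin 2) (ZMod p)) :=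
      {M | (∃ a : ZMod p, M = !![1, a; 0, 0]) ∨ M = !![0, 0; 0, 1]}
    Dominating D₀ ∧ Nat.card D₀ = p + 1 ∧
      ∀ D : Set (Matrix (Fin 2) (Fin 2) (ZMod p)), Dominating D → p + 1 ≤ Nat.card D := by
  intro Vtx Dominating D₀
  have hp3 : 3 ≤ p := by
    have h2 := (Fact.out : p.Prime).two_le
    rcases Nat.lt_or_ge p 3 with h | h
    · interval_cases p
      · exact absurd hodd (by decide)
    · exact h
  have hmem2 : (!![0, 0; 0, 1] : Mat p) ∈ D₀ := Or.inr rfl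
  have hmem1 : ∀ a : ZMod p, (!![1, a; 0, 0] : Mat p) ∈ D₀ := fun a => Or.inl ⟨a, rfl⟩
  refine ⟨⟨?_, ?_⟩, ?_, ?_⟩
  · -- all members are vertices
    rintro A (⟨a, rfl⟩ | rfl) <;> constructor
    · intro h
      have h00 : (!![1, a; 0, 0] : Mat p) 0 0 = 0 := by rw [h]; rfl
      simp at h00
    · rw [Matrix.det_fin_two_of]; ring
    · intro h
      have h11 : (!![0, 0; 0, 1] : Mat p) 1 1 = 0 := by rw [h]; rfl
      simp at h11
    · rw [Matrix.det_fin_two_of]; ring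
  · -- dominating
    intro A hA hAD
    obtain ⟨hA0, hAdet⟩ := hA
    rw [Matrix.det_fin_two] at hAdet
    by_cases hrow : A 1 0 = 0 ∧ A 1 1 = 0
    · refine ⟨!![0, 0; 0, 1], hmem2, fun h => hAD (h ▸ hmem2), Or.inr ?_⟩
      ext i j
      fin_cases i <;> fin_cases j <;>
        simp [Matrix.mul_apply, Fin.sum_univ_two, hrow.1, hrow.2]
    · have key : ∀ b : ZMod p, A 0 0 + b * A 1 0 = 0 → A 0 1 + b * A 1 1 = 0 →
          (!![1, b; 0, 0] : Mat p) * A = 0 := by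
        intro b e0 e1
        ext i j
        fin_cases i <;> fin_cases j <;>
          simp [Matrix.mul_apply, Fin.sum_univ_two] <;>
          [linear_combination e0; linear_combination e1]
      by_cases h10 : A 1 0 = 0
      · have h11 : A 1 1 ≠ 0 := fun h => hrow ⟨h10, h⟩
        set b := -(A 0 1 / A 1 1) with hb
        refine ⟨!![1, b; 0, 0], hmem1 b, fun h => hAD (h ▸ hmem1 b), Or.inr (key b ?_ ?_)⟩
        · have hA00 : A 0 0 = 0 := by
            have : A 0 0 * A 1 1 = 0 := by rw [sub_eq_zero] at hAdet; rw [hAdet, h10]; ring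
            rcases mul_eq_zero.mp this with h | h
            · exact h
            · exact absurd h h11
          rw [hA00, h10]; ring
        · rw [hb]; field_simp; ring
      · set b := -(A 0 0 / A 1 0) with hb
        refine ⟨!![1, b; 0, 0], hmem1 b, fun h => hAD (h ▸ hmem1 b), Or.inr (key b ?_ ?_)⟩
        · rw [hb]; field_simp; ring
        · rw [hb]
          field_simp
          linear_combination -hAdet
  · -- cardinality of D₀
    classical
    have hset : D₀ = ↑(insert (!![0, 0; 0, 1] : Mat p)
        (Finset.image (fun a : ZMod p => (!![1, a; 0, 0] : Mat p)) Finset.univ)) := by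
      ext x
      simp only [Set.mem_setOf_eq, Finset.coe_insert, Set.mem_insert_iff,
        Finset.coe_image, Set.mem_image, Finset.mem_coe, Finset.mem_univ, true_and,
        Finset.coe_univ, Set.image_univ, Set.mem_range]
      constructor
      · rintro (⟨a, rfl⟩ | rfl)
        · exact Or.inr ⟨a, rfl⟩
        · exact Or.inl rfl
      · rintro (rfl | ⟨a, rfl⟩)
        · exact Or.inr rfl
        · exact Or.inl ⟨a, rfl⟩
    rw [hset, Nat.card_coe_set_eq, Set.ncard_coe_finset]
    rw [Finset.card_insert_of_notMem, Finset.card_image_of_injective _ ?inj,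
      Finset.card_univ, ZMod.card]
    case inj =>
      intro a b h
      have := congrFun (congrFun h 0) 1
      simpa using this
    · intro h
      obtain ⟨a, _, h⟩ := Finset.mem_image.mp h
      have := congrFun (congrFun h 0) 0
      simp at this
  · -- lower bound
    intro D hD
    exact lower_bound hp3 D hD.1 hD.2
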